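/- Bäcklund transformation of the scalar Sine-Gordon equation. Let a be a nonzero real number and let u, u' : ℝ×ℝ → ℝ be smooth functions satisfying ∂_x((u'+u)/2) = a sin((u'−u)/2) and ∂_t((u'−u)/2) = (1/a) sin((u'+u)/2). If u solves the Sine-Gordon equation ∂_t∂_x u = sin u, then u' also solves it: ∂_t∂_x u' = sin u'. -/

import Mathlib

/-- Bäcklund transformation of the scalar Sine-Gordon equation. -/
theorem sineGordon_backlund (a : ℝ) (ha : a ≠ 0)
    (u u' : ℝ → ℝ → ℝ)
    (hu : ContDiff ℝ (⊤ : ℕ∞) fun p : ℝ × ℝ => u p.1 p.2)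
    (hu' : ContDiff ℝ (⊤ : ℕ∞) fun p : ℝ × ℝ => u' p.1 p.2)
    (hbx : ∀ x t, deriv (fun x' => (u' x' t + u x' t) / 2) x
        = a * Real.sin ((u' x t - u x t) / 2))
    (hbt : ∀ x t, deriv (fun t' => (u' x t' - u x t') / 2) t
        = (1 / a) * Real.sin ((u' x t + u x t) / 2))
    (hsg : ∀ x t, deriv (fun t' => deriv (fun x' => u x' t') x) t = Real.sin (u x t)) :
    ∀ x t, deriv (fun t' => deriv (fun x' => u' x' t') x) t = Real.sin (u' x t) := by
  intro x t
  set F : ℝ × ℝ → ℝ := fun p => u p.1 p.2 with hF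
  set F' : ℝ × ℝ → ℝ := fun p => u' p.1 p.2 with hF'
  -- partial x derivatives as fderiv applied to (1,0)
  have hg : ∀ t' : ℝ, HasFDerivAt (fun x' : ℝ => (x', t'))
      ((ContinuousLinearMap.id ℝ ℝ).prod 0) x :=
    fun t' => HasFDerivAt.prodMk (hasFDerivAt_id x) (hasFDerivAt_const t' x)
  have hDu : ∀ t', HasDerivAt (fun x' => u x' t') (fderiv ℝ F (x, t') (1, 0)) x := by
    intro t'
    have hF1 : DifferentiableAt ℝ F (x, t') := (hu.differentiable (by simp)) _
    have := (hF1.hasFDerivAt.comp x (hg t')).hasDerivAt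
    simp at this; exact this
  have hDu' : ∀ t', HasDerivAt (fun x' => u' x' t') (fderiv ℝ F' (x, t') (1, 0)) x := by
    intro t'
    have hF1 : DifferentiableAt ℝ F' (x, t') := (hu'.differentiable (by simp)) _
    have := (hF1.hasFDerivAt.comp x (hg t')).hasDerivAt
    simp at this; exact this
  set P : ℝ → ℝ := fun t' => fderiv ℝ F (x, t') (1, 0) with hP
  -- step 1: ∂ₓ u' = 2 a sin q − ∂ₓ u  pointwise in t'
  have key : (fun t' => deriv (fun x' => u' x' t') x)
      = fun t' => 2 * a * Real.sin ((u' x t' - u x t') / 2) - P t' := by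
    funext t'
    have hsum : HasDerivAt (fun x' => (u' x' t' + u x' t') / 2)
        ((fderiv ℝ F' (x, t') (1, 0) + fderiv ℝ F (x, t') (1, 0)) / 2) x :=
      ((hDu' t').add (hDu t')).div_const 2
    have h1 := hbx x t'
    rw [hsum.deriv] at h1
    have h2 := (hDu' t').deriv
    rw [h2]
    have : P t' = fderiv ℝ F (x, t') (1, 0) := rfl
    linarith [h1]
  rw [key]
  -- differentiability of t' ↦ u x t' and u' x t'
  have hgt : ∀ t' : ℝ, DifferentiableAt ℝ (fun s : ℝ => ((x, s) : ℝ × ℝ)) t' :=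
    fun t' => DifferentiableAt.prodMk (differentiableAt_const x) differentiableAt_id
  have hut : DifferentiableAt ℝ (fun t' => u x t') t :=
    ((hu.differentiable (by simp)) (x, t)).comp t (hgt t)
  have hu't : DifferentiableAt ℝ (fun t' => u' x t') t :=
    ((hu'.differentiable (by simp)) (x, t)).comp t (hgt t)
  -- q and its derivative
  have hqdiff : DifferentiableAt ℝ (fun t' => (u' x t' - u x t') / 2) t :=
    (hu't.sub hut).div_const 2
  have hq : HasDerivAt (fun t' => (u' x t' - u x t') / 2)
      ((1 / a) * Real.sin ((u' x t + u x t) / 2)) t := by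
    have := hqdiff.hasDerivAt
    rwa [hbt x t] at this
  have hsin : HasDerivAt (fun t' => 2 * a * Real.sin ((u' x t' - u x t') / 2))
      (2 * a * (Real.cos ((u' x t - u x t) / 2) * ((1 / a) * Real.sin ((u' x t + u x t) / 2)))) t :=
    ((Real.hasDerivAt_sin _).comp t hq).const_mul (2 * a)
  -- P is differentiable and deriv P t = sin (u x t)
  have hPsmooth : ContDiff ℝ (⊤ : ℕ∞) (fun p : ℝ × ℝ => fderiv ℝ F p (1, 0)) :=
    (hu.fderiv_right (mod_cast le_top)).clm_apply contDiff_const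
  have hPdiff : DifferentiableAt ℝ P t :=
    ((hPsmooth.differentiable (by simp)) (x, t)).comp t (hgt t)
  have hPderiv : deriv P t = Real.sin (u x t) := by
    have hPeq : P = fun t' => deriv (fun x' => u x' t') x :=
      funext fun t' => ((hDu t').deriv).symm
    rw [hPeq]; exact hsg x t
  have hPd : HasDerivAt P (Real.sin (u x t)) t := hPderiv ▸ hPdiff.hasDerivAt
  rw [show (fun t' => 2 * a * Real.sin ((u' x t' - u x t') / 2) - P t') = (fun t' => 2 * a * Real.sin ((u' x t' - u x t') / 2)) - P from rfl, (hsin.sub hPd).deriv]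
  -- trig identity
  set p := (u' x t + u x t) / 2 with hp
  set q := (u' x t - u x t) / 2 with hqq
  have h1 : u x t = p - q := by rw [hp, hqq]; ring
  have h2 : u' x t = p + q := by rw [hp, hqq]; ring
  rw [h1, h2, Real.sin_sub, Real.sin_add]
  field_simp
  ring
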